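/- arXiv:1308.4490 — 4 statements merged into one kernel-verified Lean document; each statement's English description precedes it below -/
import Mathlib

section
/- Let k be an algebraically closed field and r ≥ 1 an integer. The k-algebra homomorphism φ : k⟦X₁,X₂,X₃⟧ → k⟦u,v⟧ given by substituting X₁ ↦ u^r, X₂ ↦ v^r and X₃ ↦ u·v (this substitution is well defined because the series u^r, v^r and u·v have zero constant term) has kernel exactly the ideal generated by X₁·X₂ − X₃^r. In particular the induced map C_r → k⟦u,v⟧ is injective. -/
open MvPowerSeries

/-- The relation `X₁·X₂ − X₃^r` in the formal power series ring `k⟦X₁,X₂,X₃⟧`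
(variables indexed by `0, 1, 2`). -/
noncomputable def nodalRelation (k : Type) [Field k] (r : ℕ) :
    Ideal (MvPowerSeries (Fin 3) k) :=
  Ideal.span {MvPowerSeries.X 0 * MvPowerSeries.X 1 - MvPowerSeries.X 2 ^ r}

/-- `φ : k⟦X₁,X₂,X₃⟧ → k⟦u,v⟧` is the substitution homomorphism `X₁ ↦ u^r`, `X₂ ↦ v^r`,
`X₃ ↦ u·v` iff its coefficients obey the substitution formula: the coefficient of `u^i v^j`
in `φ f` is the sum of the coefficients of `f` at all monomials `X₁^{m₁} X₂^{m₂} X₃^{m₃}` with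
`r·m₁ + m₃ = i` and `r·m₂ + m₃ = j`. -/
def IsSubstHom (k : Type) [Field k] (r : ℕ)
    (φ : MvPowerSeries (Fin 3) k →ₐ[k] MvPowerSeries (Fin 2) k) : Prop :=
  ∀ (f : MvPowerSeries (Fin 3) k) (d : Fin 2 →₀ ℕ),
    MvPowerSeries.coeff (R := k) d (φ f) =
      ∑ m ∈ Finset.range (min (d 0) (d 1) + 1),
        if r ∣ (d 0 - m) ∧ r ∣ (d 1 - m) then
          MvPowerSeries.coeff (R := k)
            (Finsupp.single 0 ((d 0 - m) / r) + Finsupp.single 1 ((d 1 - m) / r) +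
              Finsupp.single 2 m) f
        else 0

namespace KerSubstAux

noncomputable def T (a b c : ℕ) : Fin 3 →₀ ℕ :=
  Finsupp.single 0 a + Finsupp.single 1 b + Finsupp.single 2 c

@[simp] lemma T_apply0 (a b c : ℕ) : T a b c 0 = a := by
  simp [T, Finsupp.single_apply]
@[simp] lemma T_apply1 (a b c : ℕ) : T a b c 1 = b := by
  simp [T, Finsupp.single_apply]
@[simp] lemma T_apply2 (a b c : ℕ) : T a b c 2 = c := by
  simp [T, Finsupp.single_apply]

lemma exists_T (e : Fin 3 →₀ ℕ) : ∃ a b c, e = T a b c :=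
  ⟨e 0, e 1, e 2, by ext i; fin_cases i <;> simp⟩

lemma T_inj {a b c a' b' c' : ℕ} : T a b c = T a' b' c' ↔ a = a' ∧ b = b' ∧ c = c' := by
  constructor
  · intro h
    exact ⟨by simpa using DFunLike.congr_fun h 0, by simpa using DFunLike.congr_fun h 1,
      by simpa using DFunLike.congr_fun h 2⟩
  · rintro ⟨rfl, rfl, rfl⟩; rfl

lemma T_le_iff {a b c : ℕ} (e : Fin 3 →₀ ℕ) : T a b c ≤ e ↔ a ≤ e 0 ∧ b ≤ e 1 ∧ c ≤ e 2 := by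
  rw [Finsupp.le_def]
  constructor
  · intro h; exact ⟨by simpa using h 0, by simpa using h 1, by simpa using h 2⟩
  · rintro ⟨h0, h1, h2⟩ i; fin_cases i <;> simpa

lemma sub_T (e : Fin 3 →₀ ℕ) (a b c : ℕ) :
    e - T a b c = T (e 0 - a) (e 1 - b) (e 2 - c) := by
  ext i; rw [Finsupp.tsub_apply]; fin_cases i <;> simp

lemma coeff_g {k : Type} [Field k] (r : ℕ) (e : Fin 3 →₀ ℕ) :
    MvPowerSeries.coeff (R := k) e (X 0 * X 1 - X 2 ^ r : MvPowerSeries (Fin 3) k) =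
      (if e = T 1 1 0 then 1 else 0) - (if e = T 0 0 r then 1 else 0) := by
  have hXX : (X 0 * X 1 : MvPowerSeries (Fin 3) k) = monomial (R := k) (T 1 1 0) 1 := by
    rw [X_def, X_def, monomial_mul_monomial, one_mul]; congr 1; simp [T]
  have hXr : (X 2 ^ r : MvPowerSeries (Fin 3) k) = monomial (R := k) (T 0 0 r) 1 := by
    rw [X_pow_eq]; congr 1; simp [T]
  rw [map_sub, hXX, hXr, coeff_monomial, coeff_monomial]

lemma phi_g_zero {k : Type} [Field k] (r : ℕ) (hr : 1 ≤ r)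
    (φ : MvPowerSeries (Fin 3) k →ₐ[k] MvPowerSeries (Fin 2) k)
    (hφ : IsSubstHom k r φ) :
    φ (X 0 * X 1 - X 2 ^ r) = 0 := by
  classical
  have hrpos : 0 < r := hr
  apply MvPowerSeries.ext; intro d
  rw [map_zero, hφ _ d]
  have key : ∀ m ∈ Finset.range (min (d 0) (d 1) + 1),
      (if r ∣ (d 0 - m) ∧ r ∣ (d 1 - m) then
        MvPowerSeries.coeff (R := k)
          (Finsupp.single 0 ((d 0 - m) / r) + Finsupp.single 1 ((d 1 - m) / r) +
            Finsupp.single 2 m) (X 0 * X 1 - X 2 ^ r : MvPowerSeries (Fin 3) k) else 0) =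
      (if m = 0 ∧ d 0 = r ∧ d 1 = r then (1 : k) else 0)
        - (if m = r ∧ d 0 = r ∧ d 1 = r then (1 : k) else 0) := by
    intro m hm
    simp only [Finset.mem_range] at hm
    have hm0 : m ≤ d 0 := by omega
    have hm1 : m ≤ d 1 := by omega
    have hT : (Finsupp.single 0 ((d 0 - m) / r) + Finsupp.single 1 ((d 1 - m) / r) +
        Finsupp.single 2 m : Fin 3 →₀ ℕ) = T ((d 0 - m) / r) ((d 1 - m) / r) m := rfl
    rw [hT, coeff_g r]
    by_cases hdvd : r ∣ (d 0 - m) ∧ r ∣ (d 1 - m)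
    · rw [if_pos hdvd]
      obtain ⟨⟨u, hu⟩, ⟨v, hv⟩⟩ := hdvd
      have hu' : (d 0 - m) / r = u := by rw [hu, Nat.mul_div_cancel_left _ hrpos]
      have hv' : (d 1 - m) / r = v := by rw [hv, Nat.mul_div_cancel_left _ hrpos]
      congr 1
      · apply if_congr _ rfl rfl
        rw [T_inj, hu', hv']
        constructor
        · rintro ⟨h1, h2, rfl⟩
          subst h1; subst h2
          refine ⟨rfl, by omega, by omega⟩
        · rintro ⟨rfl, h1, h2⟩
          exact ⟨Nat.eq_of_mul_eq_mul_left hrpos (show r * u = r * 1 by omega),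
            Nat.eq_of_mul_eq_mul_left hrpos (show r * v = r * 1 by omega), rfl⟩
      · apply if_congr _ rfl rfl
        rw [T_inj, hu', hv']
        constructor
        · rintro ⟨h1, h2, rfl⟩
          subst h1; subst h2
          refine ⟨rfl, by omega, by omega⟩
        · rintro ⟨hmr, h1, h2⟩
          have h3 := Nat.mul_eq_zero.mp (show r * u = 0 by omega)
          have h4 := Nat.mul_eq_zero.mp (show r * v = 0 by omega)
          refine ⟨by omega, by omega, hmr⟩
    · rw [if_neg hdvd, if_neg, if_neg, sub_zero]
      · rintro ⟨rfl, h1, h2⟩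
        exact hdvd ⟨⟨0, by omega⟩, ⟨0, by omega⟩⟩
      · rintro ⟨rfl, h1, h2⟩
        exact hdvd ⟨⟨1, by omega⟩, ⟨1, by omega⟩⟩
  rw [Finset.sum_congr rfl key, Finset.sum_sub_distrib]
  by_cases hd : d 0 = r ∧ d 1 = r
  · obtain ⟨h0, h1⟩ := hd
    simp only [h0, h1, min_self, and_true]
    rw [Finset.sum_ite_eq' (Finset.range (r + 1)) 0 (fun _ => (1 : k)),
      Finset.sum_ite_eq' (Finset.range (r + 1)) r (fun _ => (1 : k))]
    simp
  · rw [Finset.sum_eq_zero, Finset.sum_eq_zero, sub_zero]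
    · intro m _; rw [if_neg]; tauto
    · intro m _; rw [if_neg]; tauto

end KerSubstAux

open KerSubstAux

/-- The kernel of the substitution homomorphism `φ : k⟦X₁,X₂,X₃⟧ → k⟦u,v⟧`,
`X₁ ↦ u^r`, `X₂ ↦ v^r`, `X₃ ↦ u·v`, is exactly the ideal generated by `X₁·X₂ − X₃^r`.
In particular the induced map `C_r → k⟦u,v⟧` is injective. -/
theorem ker_substHom (k : Type) [Field k] [IsAlgClosed k] (r : ℕ) (hr : 1 ≤ r)
    (φ : MvPowerSeries (Fin 3) k →ₐ[k] MvPowerSeries (Fin 2) k)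
    (hφ : IsSubstHom k r φ) :
    RingHom.ker (φ : MvPowerSeries (Fin 3) k →+* MvPowerSeries (Fin 2) k) =
      nodalRelation k r := by
  classical
  have hrpos : 0 < r := hr
  set g : MvPowerSeries (Fin 3) k := X 0 * X 1 - X 2 ^ r with hgdef
  -- φ g = 0  (proved below as hg, proof omitted here for now)
  have hg : φ g = 0 := by
    rw [hgdef]
    exact phi_g_zero r hr φ hφ
  have hspan : nodalRelation k r = Ideal.span {g} := rfl
  apply le_antisymm
  · -- ker ≤ span
    intro f hf
    rw [RingHom.mem_ker] at hf
    set q : MvPowerSeries (Fin 3) k := fun e =>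
      ∑ s ∈ Finset.range (e 2 / r + 1),
        MvPowerSeries.coeff (R := k) (T (e 0 + 1 + s) (e 1 + 1 + s) (e 2 - r * s)) f with hqdef
    set h : MvPowerSeries (Fin 3) k := fun e =>
      if 1 ≤ e 0 ∧ 1 ≤ e 1 then 0 else
        ∑ t ∈ Finset.range (e 2 / r + 1),
          MvPowerSeries.coeff (R := k) (T (e 0 + t) (e 1 + t) (e 2 - r * t)) f with hhdef
    have hqc : ∀ a b c : ℕ, MvPowerSeries.coeff (R := k) (T a b c) q =
        ∑ s ∈ Finset.range (c / r + 1),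
          MvPowerSeries.coeff (R := k) (T (a + 1 + s) (b + 1 + s) (c - r * s)) f := by
      intro a b c
      rw [MvPowerSeries.coeff_apply, hqdef]
      simp
    have hhc : ∀ a b c : ℕ, MvPowerSeries.coeff (R := k) (T a b c) h =
        if 1 ≤ a ∧ 1 ≤ b then 0 else
          ∑ t ∈ Finset.range (c / r + 1),
            MvPowerSeries.coeff (R := k) (T (a + t) (b + t) (c - r * t)) f := by
      intro a b c
      rw [MvPowerSeries.coeff_apply, hhdef]
      simp
    have hS : ∀ a b c : ℕ, (∑ t ∈ Finset.range (c / r + 1),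
          MvPowerSeries.coeff (R := k) (T (a + t) (b + t) (c - r * t)) f) =
        MvPowerSeries.coeff (R := k) (T a b c) f +
          (if r ≤ c then MvPowerSeries.coeff (R := k) (T a b (c - r)) q else 0) := by
      intro a b c
      rw [Finset.sum_range_succ']
      by_cases hc : r ≤ c
      · rw [if_pos hc, hqc]
        have hdiv : c / r = (c - r) / r + 1 := by
          rw [Nat.div_eq_sub_div hrpos hc]
        rw [hdiv]
        have e0 : T (a + 0) (b + 0) (c - r * 0) = T a b c := by norm_num
        rw [e0, add_comm]
        congr 1
        apply Finset.sum_congr rfl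
        intro s _
        have h1 : a + (s + 1) = a + 1 + s := by omega
        have h2 : b + (s + 1) = b + 1 + s := by omega
        have h3 : c - r * (s + 1) = c - r - r * s := by
          have : r * (s + 1) = r * s + r := by ring
          omega
        rw [h1, h2, h3]
      · rw [if_neg hc]
        have hc0 : c / r = 0 := Nat.div_eq_of_lt (by omega)
        rw [hc0]
        simp
    -- key identity : f = q * g + h
    have hfqg : f = q * g + h := by
      apply MvPowerSeries.ext; intro e
      obtain ⟨a, b, c, rfl⟩ := exists_T e
      rw [map_add]
      have hXX : (X 0 * X 1 : MvPowerSeries (Fin 3) k) = monomial (R := k) (T 1 1 0) 1 := by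
        rw [X_def, X_def, monomial_mul_monomial, one_mul]; congr 1; simp [T]
      have hXr : (X 2 ^ r : MvPowerSeries (Fin 3) k) = monomial (R := k) (T 0 0 r) 1 := by
        rw [X_pow_eq]; congr 1; simp [T]
      have hmul : MvPowerSeries.coeff (R := k) (T a b c) (q * g) =
          (if 1 ≤ a ∧ 1 ≤ b then MvPowerSeries.coeff (R := k) (T (a - 1) (b - 1) c) q else 0)
            - (if r ≤ c then MvPowerSeries.coeff (R := k) (T a b (c - r)) q else 0) := by
        rw [hgdef, mul_sub, map_sub, hXX, hXr, MvPowerSeries.coeff_mul_monomial,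
          MvPowerSeries.coeff_mul_monomial]
        congr 1
        · by_cases hab : 1 ≤ a ∧ 1 ≤ b
          · rw [if_pos ((T_le_iff _).mpr (by simp [hab.1, hab.2])), if_pos hab, sub_T, mul_one]
            simp
          · rw [if_neg, if_neg hab]
            intro hle
            rw [T_le_iff] at hle
            simp only [T_apply0, T_apply1] at hle
            exact hab ⟨hle.1, hle.2.1⟩
        · by_cases hc : r ≤ c
          · rw [if_pos ((T_le_iff _).mpr (by simp [hc])), if_pos hc, sub_T, mul_one]
            simp
          · rw [if_neg, if_neg hc]
            intro hle
            rw [T_le_iff] at hle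
            simp only [T_apply2] at hle
            exact hc hle.2.2
      rw [hmul, hhc]
      by_cases hab : 1 ≤ a ∧ 1 ≤ b
      · rw [if_pos hab, if_pos hab, hqc]
        have hsum : (∑ s ∈ Finset.range (c / r + 1),
            MvPowerSeries.coeff (R := k) (T (a - 1 + 1 + s) (b - 1 + 1 + s) (c - r * s)) f) =
            ∑ s ∈ Finset.range (c / r + 1),
              MvPowerSeries.coeff (R := k) (T (a + s) (b + s) (c - r * s)) f := by
          apply Finset.sum_congr rfl
          intro s _
          have h1 : a - 1 + 1 + s = a + s := by omega
          have h2 : b - 1 + 1 + s = b + s := by omega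
          rw [h1, h2]
        rw [hsum, hS]
        ring
      · rw [if_neg hab, if_neg hab, hS]
        ring
    -- φ h = 0
    have h1 : φ f = φ q * φ g + φ h := by rw [hfqg, map_add, map_mul]
    have hφh : φ h = 0 := by
      rw [hg, mul_zero, zero_add] at h1
      rw [← h1]; exact hf
    -- h = 0
    have hh0 : h = 0 := by
      apply MvPowerSeries.ext; intro e
      obtain ⟨a, b, c, rfl⟩ := exists_T e
      rw [map_zero]
      by_cases hab : 1 ≤ a ∧ 1 ≤ b
      · rw [hhc, if_pos hab]
      · have hab' : a = 0 ∨ b = 0 := by omega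
        set d : Fin 2 →₀ ℕ := Finsupp.single 0 (r * a + c) + Finsupp.single 1 (r * b + c)
          with hddef
        have hd0 : d 0 = r * a + c := by simp [hddef, Finsupp.single_apply]
        have hd1 : d 1 = r * b + c := by simp [hddef, Finsupp.single_apply]
        have h0 := hφ h d
        rw [hφh, map_zero, hd0, hd1] at h0
        have hmin : min (r * a + c) (r * b + c) = c := by
          rcases hab' with hz | hz
          · rw [hz, Nat.mul_zero, Nat.zero_add]
            exact min_eq_left (Nat.le_add_left _ _)
          · rw [hz, Nat.mul_zero, Nat.zero_add]
            exact min_eq_right (Nat.le_add_left _ _)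
        rw [hmin] at h0
        rw [Finset.sum_eq_single_of_mem c (Finset.self_mem_range_succ c)] at h0
        · have e1 : r * a + c - c = r * a := by omega
          have e2 : r * b + c - c = r * b := by omega
          rw [e1, e2, if_pos ⟨dvd_mul_right r a, dvd_mul_right r b⟩,
            Nat.mul_div_cancel_left a hrpos, Nat.mul_div_cancel_left b hrpos] at h0
          exact h0.symm
        · intro m hmr hmc
          simp only [Finset.mem_range] at hmr
          have hmlt : m < c := by omega
          split_ifs with hdvd
          · obtain ⟨hdvd0, hdvd1⟩ := hdvd
            have hx : 1 ≤ (r * a + c - m) / r := by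
              rw [Nat.one_le_div_iff hrpos]
              exact Nat.le_of_dvd (by omega) hdvd0
            have hy : 1 ≤ (r * b + c - m) / r := by
              rw [Nat.one_le_div_iff hrpos]
              exact Nat.le_of_dvd (by omega) hdvd1
            have := hhc ((r * a + c - m) / r) ((r * b + c - m) / r) m
            rw [if_pos ⟨hx, hy⟩] at this
            exact this
          · rfl
    rw [hh0, add_zero] at hfqg
    rw [hspan]
    exact Ideal.mem_span_singleton.mpr ⟨q, by rw [hfqg, mul_comm]⟩
  · -- span ≤ ker
    rw [hspan, Ideal.span_le]
    intro x hx
    simp only [Set.mem_singleton_iff] at hx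
    subst hx
    rw [SetLike.mem_coe, RingHom.mem_ker]
    exact hg
end

section
/- Let k be an algebraically closed field, r ≥ 1 and a ≥ 1 integers. The ideal I_a = (x₁, x₃^a) of C_r = k⟦X₁,X₂,X₃⟧ ⧸ (X₁·X₂ − X₃^r), regarded as a C_r-module, is reflexive: the canonical evaluation map from I_a to the dual of its dual module is bijective (Module.IsReflexive C_r I_a). (These two-generator ideals are the reflexive local models appearing in Lemma 4.1 of the paper.) -/
/-- The local ring `C_r = k⟦X₁,X₂,X₃⟧ ⧸ (X₁·X₂ − X₃^r)` of the A-type surface singularity. -/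
abbrev Cring (k : Type) [Field k] (r : ℕ) : Type :=
  MvPowerSeries (Fin 3) k ⧸ nodalRelation k r

/-- `x₁`, the image of `X₁` in `C_r`. -/
noncomputable def xone (k : Type) [Field k] (r : ℕ) : Cring k r :=
  Ideal.Quotient.mk (nodalRelation k r) (MvPowerSeries.X 0)

/-- `x₃`, the image of `X₃` in `C_r`. -/
noncomputable def xthree (k : Type) [Field k] (r : ℕ) : Cring k r :=
  Ideal.Quotient.mk (nodalRelation k r) (MvPowerSeries.X 2)

/-- The two-generator ideal `I_a = (x₁, x₃^a)` of `C_r`. -/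
noncomputable def Iideal (k : Type) [Field k] (r a : ℕ) : Ideal (Cring k r) :=
  Ideal.span {xone k r, xthree k r ^ a}


set_option linter.unusedSectionVars false
set_option linter.unusedVariables false
set_option synthInstance.maxHeartbeats 1000000
set_option maxHeartbeats 1000000

open MvPowerSeries Finsupp

namespace ReflexAux


variable {σ : Type*} {R : Type*} [CommRing R] [IsDomain R]

/-- "Set the variable `s` to zero" as a raw operation on coefficients. -/
noncomputable def killVar (s : σ) (φ : MvPowerSeries σ R) : MvPowerSeries σ R :=
  fun m => if m s = 0 then MvPowerSeries.coeff m φ else 0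

lemma coeff_killVar (s : σ) (φ : MvPowerSeries σ R) (m : σ →₀ ℕ) :
    MvPowerSeries.coeff m (killVar s φ) =
      if m s = 0 then MvPowerSeries.coeff m φ else 0 := rfl

lemma killVar_eq_zero_iff (s : σ) (φ : MvPowerSeries σ R) :
    killVar s φ = 0 ↔ (X s : MvPowerSeries σ R) ∣ φ := by
  rw [X_dvd_iff]
  constructor
  · intro h m hm
    have := congrArg (fun ψ => MvPowerSeries.coeff m ψ) h
    simpa [coeff_killVar, hm] using this
  · intro h
    ext m
    simp only [coeff_killVar, map_zero]
    split_ifs with hm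
    · exact h m hm
    · rfl

lemma killVar_mul_killVar (s : σ) (φ ψ : MvPowerSeries σ R)
    (h : (X s : MvPowerSeries σ R) ∣ φ * ψ) :
    killVar s φ * killVar s ψ = 0 := by
  classical
  rw [X_dvd_iff] at h
  ext m
  rw [map_zero, MvPowerSeries.coeff_mul]
  by_cases hm : m s = 0
  · rw [← h m hm, MvPowerSeries.coeff_mul]
    refine Finset.sum_congr rfl fun p hp => ?_
    rw [Finset.HasAntidiagonal.mem_antidiagonal] at hp
    have h1 : p.1 s + p.2 s = 0 := by
      have := congrArg (fun n : σ →₀ ℕ => n s) hp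
      simpa [hm] using this
    rw [coeff_killVar, coeff_killVar, if_pos (by omega), if_pos (by omega)]
  · refine Finset.sum_eq_zero fun p hp => ?_
    rw [Finset.HasAntidiagonal.mem_antidiagonal] at hp
    have h1 : p.1 s + p.2 s = m s := by
      have := congrArg (fun n : σ →₀ ℕ => n s) hp
      simpa using this
    rcases Nat.eq_zero_or_pos (p.1 s) with h2 | h2
    · rw [coeff_killVar (φ := ψ), if_neg (by omega), mul_zero]
    · rw [coeff_killVar (φ := φ), if_neg (by omega), zero_mul]

theorem prime_X [DecidableEq σ] (s : σ) : Prime (X s : MvPowerSeries σ R) := by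
  refine ⟨?_, ?_, ?_⟩
  · intro h
    have := congrArg (MvPowerSeries.coeff (single s 1)) h
    simpa using this
  · intro h
    have hdvd : (X s : MvPowerSeries σ R) ∣ 1 := h.dvd
    rw [X_dvd_iff] at hdvd
    have := hdvd 0 (by simp)
    simpa using this
  · intro φ ψ h
    have h0 := killVar_mul_killVar s φ ψ h
    rcases mul_eq_zero.mp h0 with h1 | h1
    · exact Or.inl ((killVar_eq_zero_iff s φ).mp h1)
    · exact Or.inr ((killVar_eq_zero_iff s ψ).mp h1)

theorem X_not_dvd_X [DecidableEq σ] {i j : σ} (hij : i ≠ j) :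
    ¬ ((X i : MvPowerSeries σ R) ∣ X j) := by
  intro h
  rw [X_dvd_iff] at h
  have := h (single j 1) (by simp [single_apply, hij.symm])
  simpa using this



variable {k : Type} [Field k] {r : ℕ}

local notation "P" => MvPowerSeries (Fin 3) k
local notation "A" => (MvPowerSeries.X 0 : MvPowerSeries (Fin 3) k)
local notation "B" => (MvPowerSeries.X 1 : MvPowerSeries (Fin 3) k)
local notation "C" => (MvPowerSeries.X 2 : MvPowerSeries (Fin 3) k)

lemma prime_X' (s : Fin 3) :
    Prime (MvPowerSeries.X s : MvPowerSeries (Fin 3) k) :=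
  prime_X s

lemma X_not_dvd_X' {i j : Fin 3} (hij : i ≠ j) :
    ¬ ((MvPowerSeries.X i : MvPowerSeries (Fin 3) k) ∣ MvPowerSeries.X j) :=
  X_not_dvd_X hij

lemma X0_not_dvd_f (hr : 1 ≤ r) : ¬ (A ∣ A * B - C ^ r) := by
  intro h
  have h2 : A ∣ C ^ r := (dvd_sub_right (dvd_mul_right _ _)).mp h
  exact X_not_dvd_X' (by decide : (0 : Fin 3) ≠ 2) ((prime_X' 0).dvd_of_dvd_pow h2)

lemma X2_not_dvd_f (hr : 1 ≤ r) : ¬ (C ∣ A * B - C ^ r) := by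
  intro h
  have h2 : C ∣ A * B := by
    have := dvd_add h (dvd_pow_self C (by omega : r ≠ 0))
    simpa using this
  rcases (prime_X' 2).2.2 _ _ h2 with h3 | h3
  · exact X_not_dvd_X' (by decide : (2 : Fin 3) ≠ 0) h3
  · exact X_not_dvd_X' (by decide : (2 : Fin 3) ≠ 1) h3

/-- `x₂`, the image of `X₂`. -/
noncomputable def xtwo (k : Type) [Field k] (r : ℕ) : Cring k r :=
  Ideal.Quotient.mk (nodalRelation k r) (MvPowerSeries.X 1)

lemma dvd_of_mk_eq_zero {U : P} (h : Ideal.Quotient.mk (nodalRelation k r) U = 0) :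
    (A * B - C ^ r) ∣ U := by
  rw [Ideal.Quotient.eq_zero_iff_mem, nodalRelation, Ideal.mem_span_singleton] at h
  exact h

lemma mk_eq_zero_of_dvd {U : P} (h : (A * B - C ^ r) ∣ U) :
    Ideal.Quotient.mk (nodalRelation k r) U = 0 := by
  rw [Ideal.Quotient.eq_zero_iff_mem, nodalRelation, Ideal.mem_span_singleton]
  exact h

/-- Regularity: if `g` is prime and does not divide the relation, its image is regular. -/
lemma regular_of_prime {g : P} (hg : Prime g) (hnd : ¬ g ∣ (A * B - C ^ r))
    (u : Cring k r) (h : Ideal.Quotient.mk (nodalRelation k r) g * u = 0) : u = 0 := by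
  obtain ⟨U, rfl⟩ := Ideal.Quotient.mk_surjective u
  rw [← map_mul] at h
  obtain ⟨W, hW⟩ := dvd_of_mk_eq_zero h
  have h2 : g ∣ (A * B - C ^ r) * W := ⟨U, by linear_combination -hW⟩
  rcases hg.2.2 _ _ h2 with h3 | h3
  · exact absurd h3 hnd
  · obtain ⟨W', rfl⟩ := h3
    have h4 : U = (A * B - C ^ r) * W' :=
      mul_left_cancel₀ hg.ne_zero (by linear_combination hW)
    exact mk_eq_zero_of_dvd ⟨W', h4⟩

lemma xone_regular (hr : 1 ≤ r) (u : Cring k r) (h : xone k r * u = 0) : u = 0 :=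
  regular_of_prime (prime_X' 0) (X0_not_dvd_f hr) u h

lemma xthree_regular (hr : 1 ≤ r) (u : Cring k r) (h : xthree k r * u = 0) : u = 0 :=
  regular_of_prime (prime_X' 2) (X2_not_dvd_f hr) u h

lemma xone_cancel (hr : 1 ≤ r) {p q : Cring k r} (h : xone k r * p = xone k r * q) : p = q := by
  have := xone_regular hr (p - q) (by ring_nf; linear_combination h)
  linear_combination this

/-- The fundamental relation `x₃ ^ r = x₁ * x₂`. -/
lemma xthree_pow_rel : xthree k r ^ r = xone k r * xtwo k r := by
  rw [xthree, xone, xtwo, ← map_pow, ← map_mul, Ideal.Quotient.eq]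
  rw [nodalRelation, Ideal.mem_span_singleton]
  exact ⟨-1, by ring⟩

/-- The colon computation: if `x₃ ^ b * u = x₁ * v` with `a + b = r`, then `u ∈ I_a`. -/
lemma mem_Iideal_of_colon (hr : 1 ≤ r) {a b : ℕ} (hab : a + b = r) {u v : Cring k r}
    (h : xthree k r ^ b * u = xone k r * v) : u ∈ Iideal k r a := by
  obtain ⟨U, rfl⟩ := Ideal.Quotient.mk_surjective u
  obtain ⟨V, rfl⟩ := Ideal.Quotient.mk_surjective v
  have h0 : Ideal.Quotient.mk (nodalRelation k r) (C ^ b * U - A * V) = 0 := by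
    rw [map_sub, map_mul, map_mul, map_pow]
    rw [xthree, xone] at h
    linear_combination h
  obtain ⟨W, hW⟩ := dvd_of_mk_eq_zero h0
  have hpow : (C : P) ^ r = C ^ a * C ^ b := by rw [← pow_add]; congr 1; omega
  have key : A ∣ (U + C ^ a * W) * C ^ b := by
    refine ⟨V + B * W, ?_⟩
    rw [hpow] at hW
    linear_combination hW
  have h5 : A ∣ U + C ^ a * W := by
    rcases (prime_X' 0).2.2 _ _ key with h5 | h5
    · exact h5
    · exact absurd ((prime_X' 0).dvd_of_dvd_pow h5)
        (X_not_dvd_X' (by decide : (0 : Fin 3) ≠ 2))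
  obtain ⟨T, hT⟩ := h5
  rw [Iideal, Ideal.mem_span_pair]
  refine ⟨Ideal.Quotient.mk _ T, -Ideal.Quotient.mk _ W, ?_⟩
  have hU : U = A * T - C ^ a * W := by linear_combination hT
  rw [hU, map_sub, map_mul, map_mul, map_pow, xone, xthree]
  ring

/-- products of elements of `I_a` and `I_b` are divisible by `x₁` when `a + b = r`. -/
lemma mul_mem_span_xone {a b : ℕ} (hab : a + b = r) {s t : Cring k r}
    (hs : s ∈ Iideal k r a) (ht : t ∈ Iideal k r b) :
    ∃ w : Cring k r, s * t = xone k r * w := by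
  rw [Iideal, Ideal.mem_span_pair] at hs ht
  obtain ⟨c, d, hs⟩ := hs
  obtain ⟨c', d', ht⟩ := ht
  have hpow : xthree k r ^ a * xthree k r ^ b = xone k r * xtwo k r := by
    rw [← pow_add, hab, xthree_pow_rel]
  refine ⟨c * c' * xone k r + c * d' * xthree k r ^ b + d * c' * xthree k r ^ a
    + d * d' * xtwo k r, ?_⟩
  linear_combination (c' * xone k r + d' * xthree k r ^ b) * hs.symm
    + s * ht.symm + d * d' * hpow



section Pairing

variable (k : Type) [Field k] (r : ℕ)

lemma xone_mem (b : ℕ) : xone k r ∈ Iideal k r b := by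
  rw [Iideal]; exact Ideal.subset_span (Set.mem_insert _ _)

lemma xthree_pow_mem (b : ℕ) : xthree k r ^ b ∈ Iideal k r b := by
  rw [Iideal]; exact Ideal.subset_span (Set.mem_insert_of_mem _ rfl)

/-- Multiplication by `x₁` as a linear map onto the ideal `(x₁)`. -/
noncomputable def spanXoneMap :
    Cring k r →ₗ[Cring k r] (Ideal.span {xone k r} : Ideal (Cring k r)) :=
  LinearMap.codRestrict _ (LinearMap.toSpanSingleton (Cring k r) (Cring k r) (xone k r))
    fun c => Submodule.smul_mem _ c (Submodule.mem_span_singleton_self _)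

lemma spanXoneMap_bijective (hr : 1 ≤ r) : Function.Bijective (spanXoneMap k r) := by
  constructor
  · intro c c' h
    have h1 : c • xone k r = c' • xone k r := congrArg Subtype.val h
    exact xone_cancel hr (by rw [mul_comm, mul_comm (xone k r) c']; exact h1)
  · rintro ⟨z, hz⟩
    obtain ⟨c, hc⟩ := Submodule.mem_span_singleton.mp hz
    exact ⟨c, Subtype.ext hc⟩

/-- Division by the regular element `x₁` on the ideal `(x₁)`, as a linear equivalence. -/
noncomputable def divEquiv (hr : 1 ≤ r) :
    Cring k r ≃ₗ[Cring k r] (Ideal.span {xone k r} : Ideal (Cring k r)) :=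
  LinearEquiv.ofBijective _ (spanXoneMap_bijective k r hr)

lemma coe_divEquiv (hr : 1 ≤ r) (c : Cring k r) :
    ((divEquiv k r hr c : Ideal.span {xone k r}) : Cring k r) = c * xone k r := by
  simp [divEquiv, spanXoneMap, LinearEquiv.ofBijective_apply, smul_eq_mul]
  rfl

/-- The bilinear multiplication map `I_a × I_b → (x₁)`. -/
noncomputable def pairMul (a b : ℕ) (hab : a + b = r) :
    (Iideal k r a) →ₗ[Cring k r] (Iideal k r b) →ₗ[Cring k r]
      (Ideal.span {xone k r} : Ideal (Cring k r)) :=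
  LinearMap.mk₂ (Cring k r)
    (fun s t => ⟨(s : Cring k r) * t, by
      obtain ⟨w, hw⟩ := mul_mem_span_xone hab s.2 t.2
      exact Ideal.mem_span_singleton.mpr ⟨w, hw⟩⟩)
    (fun s s' t => Subtype.ext (by push_cast; ring))
    (fun c s t => Subtype.ext (by push_cast [smul_eq_mul]; ring))
    (fun s t t' => Subtype.ext (by push_cast; ring))
    (fun c s t => Subtype.ext (by push_cast [smul_eq_mul]; ring))

/-- The pairing `I_a × I_b → C_r`, `(s, t) ↦ s t / x₁`. -/
noncomputable def pairB (a b : ℕ) (hab : a + b = r) (hr : 1 ≤ r) :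
    (Iideal k r a) →ₗ[Cring k r] (Iideal k r b) →ₗ[Cring k r] Cring k r :=
  (pairMul k r a b hab).compr₂ (divEquiv k r hr).symm.toLinearMap

lemma pairB_spec (a b : ℕ) (hab : a + b = r) (hr : 1 ≤ r)
    (s : Iideal k r a) (t : Iideal k r b) :
    xone k r * (pairB k r a b hab hr s t) = (s : Cring k r) * t := by
  have h1 : ((divEquiv k r hr ((divEquiv k r hr).symm (pairMul k r a b hab s t)) :
      Ideal.span {xone k r}) : Cring k r) = ((pairMul k r a b hab s t : _) : Cring k r) :=
    congrArg _ (LinearEquiv.apply_symm_apply _ _)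
  rw [coe_divEquiv] at h1
  have h2 : ((pairMul k r a b hab s t : _) : Cring k r) = (s : Cring k r) * t := rfl
  rw [h2] at h1
  rw [← h1]
  show xone k r * ((pairMul k r a b hab).compr₂ (divEquiv k r hr).symm.toLinearMap s t) = _
  rw [LinearMap.compr₂_apply]
  ring_nf
  rfl

lemma pairB_bijective (a b : ℕ) (hab : a + b = r) (hr : 1 ≤ r) :
    Function.Bijective (pairB k r a b hab hr) := by
  constructor
  · refine (injective_iff_map_eq_zero _).mpr fun s hs => ?_
    have h1 : pairB k r a b hab hr s ⟨xone k r, xone_mem k r b⟩ = 0 := by rw [hs]; rfl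
    have h2 := pairB_spec k r a b hab hr s ⟨xone k r, xone_mem k r b⟩
    rw [h1, mul_zero] at h2
    have h3 : xone k r * (s : Cring k r) = 0 := by
      rw [mul_comm]; exact h2.symm
    exact Subtype.ext (xone_regular hr _ h3)
  · intro φ
    set e₁ : (Iideal k r b) := ⟨xone k r, xone_mem k r b⟩ with he₁
    set e₂ : (Iideal k r b) := ⟨xthree k r ^ b, xthree_pow_mem k r b⟩ with he₂
    set u := φ e₁ with hu
    set v := φ e₂ with hv
    have hz1 : (⟨xone k r * xthree k r ^ b, Ideal.mul_mem_left _ _ (xthree_pow_mem k r b)⟩ :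
        Iideal k r b) = xthree k r ^ b • e₁ := Subtype.ext (by
      simp only [he₁, SetLike.mk_smul_mk, smul_eq_mul]; ring)
    have hz2 : (⟨xone k r * xthree k r ^ b, Ideal.mul_mem_left _ _ (xthree_pow_mem k r b)⟩ :
        Iideal k r b) = xone k r • e₂ := Subtype.ext (by
      simp only [he₂, SetLike.mk_smul_mk, smul_eq_mul])
    have hkey : xthree k r ^ b * u = xone k r * v := by
      have := congrArg φ (hz1.symm.trans hz2)
      rw [map_smul, map_smul] at this
      simpa [smul_eq_mul, hu, hv] using this
    have hmem : u ∈ Iideal k r a := mem_Iideal_of_colon hr hab hkey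
    refine ⟨⟨u, hmem⟩, ?_⟩
    apply LinearMap.ext
    intro t
    have ht : (t : Cring k r) ∈ Ideal.span {xone k r, xthree k r ^ b} := t.2
    obtain ⟨c, d, hcd⟩ := Ideal.mem_span_pair.mp ht
    have ht' : t = c • e₁ + d • e₂ := Subtype.ext (by
      simp only [he₁, he₂, Submodule.coe_add, SetLike.mk_smul_mk, smul_eq_mul]
      exact hcd.symm)
    have pe₁ : pairB k r a b hab hr ⟨u, hmem⟩ e₁ = u := by
      apply xone_cancel hr
      rw [pairB_spec]
      show u * xone k r = _
      ring
    have pe₂ : pairB k r a b hab hr ⟨u, hmem⟩ e₂ = v := by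
      apply xone_cancel hr
      rw [pairB_spec]
      show u * xthree k r ^ b = _
      rw [mul_comm, hkey]
    rw [ht', map_add, map_smul, map_smul, map_add, map_smul, map_smul, pe₁, pe₂, hu, hv]

lemma pairB_flip (a b : ℕ) (hab : a + b = r) (hba : b + a = r) (hr : 1 ≤ r) :
    (pairB k r a b hab hr).flip = pairB k r b a hba hr := by
  apply LinearMap.ext; intro t
  apply LinearMap.ext; intro s
  show (divEquiv k r hr).symm (pairMul k r a b hab s t) =
    (divEquiv k r hr).symm (pairMul k r b a hba t s)
  congr 1
  exact Subtype.ext (mul_comm _ _)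

lemma Iideal_eq_span (hr : 1 ≤ r) (a : ℕ) (hra : r ≤ a) :
    Iideal k r a = Ideal.span {xone k r} := by
  show Ideal.span {xone k r, xthree k r ^ a} = Ideal.span {xone k r}
  apply le_antisymm
  · rw [Ideal.span_le]
    intro x hx
    simp only [Set.mem_insert_iff, Set.mem_singleton_iff] at hx
    rcases hx with rfl | rfl
    · exact Submodule.mem_span_singleton_self _
    · rw [SetLike.mem_coe, Ideal.mem_span_singleton]
      refine ⟨xtwo k r * xthree k r ^ (a - r), ?_⟩
      have h1 : xthree k r ^ a = xthree k r ^ r * xthree k r ^ (a - r) := by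
        rw [← pow_add]; congr 1; omega
      rw [h1, xthree_pow_rel]; ring
  · exact (Ideal.span_singleton_le_iff_mem _).mpr (Ideal.subset_span (Set.mem_insert _ _))

end Pairing

end ReflexAux

/-- The ideal `I_a = (x₁, x₃^a)` of `C_r`, regarded as a `C_r`-module, is reflexive:
the canonical evaluation map to its double dual is bijective. -/
theorem Iideal_isReflexive (k : Type) [Field k] [IsAlgClosed k] (r a : ℕ)
    (hr : 1 ≤ r) (ha : 1 ≤ a) :
    Module.IsReflexive (Cring k r) (Iideal k r a) := by
  rcases le_or_gt r a with hra | hra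
  · rw [ReflexAux.Iideal_eq_span k r hr a hra]
    exact Module.equiv (ReflexAux.divEquiv k r hr)
  · have hab : a + (r - a) = r := by omega
    have hba : (r - a) + a = r := by omega
    haveI : (ReflexAux.pairB k r a (r - a) hab hr).IsPerfPair := ⟨
      (ReflexAux.pairB_bijective k r a (r - a) hab hr),
      (by rw [ReflexAux.pairB_flip k r a (r - a) hab hba hr]
          exact ReflexAux.pairB_bijective k r (r - a) a hba hr)⟩
    exact Module.IsReflexive.of_isPerfPair (ReflexAux.pairB k r a (r - a) hab hr)
end

section
/- (Presentation of the first blow-up chart, from the proof of Proposition 4.2 of the paper.) Let k be an algebraically closed field and r, a integers with 1 ≤ a ≤ r. Let K be the field of fractions of the domain C_r, and let ε₁ : P[Y] → K be the P-algebra homomorphism extending the composite P → C_r → K and sending Y to x₃^a / x₁ (note x₁ ≠ 0 in the domain C_r). Then the kernel of ε₁ is exactly the ideal of P[Y] generated by X₁·Y − X₃^a and X₃^(r−a)·Y − X₂. Consequently the C_r-subalgebra of K generated by x₃^a/x₁ is isomorphic to A₁(a) = k⟦X₁,X₂,X₃⟧[Y] ⧸ (X₁·Y − X₃^a, X₃^(r−a)·Y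 − X₂). -/
open Polynomial MvPowerSeries

/-- The ideal of `P[Y]` defining the first blow-up chart
`A₁(a) = P[Y] ⧸ (X₁·Y − X₃^a, X₃^(r−a)·Y − X₂)`. -/
noncomputable def chartOneRelation (k : Type) [Field k] (r a : ℕ) :
    Ideal (Polynomial (MvPowerSeries (Fin 3) k)) :=
  Ideal.span
    {Polynomial.C (MvPowerSeries.X 0) * Polynomial.X - Polynomial.C (MvPowerSeries.X 2 ^ a),
     Polynomial.C (MvPowerSeries.X 2 ^ (r - a)) * Polynomial.X - Polynomial.C (MvPowerSeries.X 1)}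

/-- The first blow-up chart `A₁(a)` of the blow-up of `Spec C_r` along `(x₁, x₃^a)`. -/
abbrev chartOne (k : Type) [Field k] (r a : ℕ) : Type :=
  Polynomial (MvPowerSeries (Fin 3) k) ⧸ chartOneRelation k r a

noncomputable section

namespace ChartOneAux

variable {k : Type} [Field k]

/-- The ring endomorphism of `k⟦X₁,X₂,X₃⟧` substituting `0` for the `j`-th variable. -/
def killHom (j : Fin 3) : MvPowerSeries (Fin 3) k →+* MvPowerSeries (Fin 3) k where
  toFun f := fun d => if d j = 0 then MvPowerSeries.coeff d f else 0
  map_one' := by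
    apply MvPowerSeries.ext
    intro d
    show (if d j = 0 then MvPowerSeries.coeff d 1 else 0) = MvPowerSeries.coeff d 1
    by_cases h : d j = 0
    · rw [if_pos h]
    · rw [if_neg h, MvPowerSeries.coeff_one, if_neg]
      intro hd
      exact h (by simp [hd])
  map_mul' f g := by
    apply MvPowerSeries.ext
    intro d
    show (if d j = 0 then MvPowerSeries.coeff d (f * g) else 0) = MvPowerSeries.coeff d _
    rw [MvPowerSeries.coeff_mul]
    erw [MvPowerSeries.coeff_mul]
    by_cases h : d j = 0
    · rw [if_pos h]
      apply Finset.sum_congr rfl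
      rintro ⟨u, v⟩ huv
      rw [Finset.HasAntidiagonal.mem_antidiagonal] at huv
      have huv' : u j + v j = 0 := by rw [← Finsupp.add_apply, huv, h]
      show _ = (if u j = 0 then _ else 0) * (if v j = 0 then _ else 0)
      rw [if_pos (by omega), if_pos (by omega)]
    · rw [if_neg h]
      symm
      apply Finset.sum_eq_zero
      rintro ⟨u, v⟩ huv
      rw [Finset.HasAntidiagonal.mem_antidiagonal] at huv
      have huv' : u j + v j = d j := by rw [← Finsupp.add_apply, huv]
      show (if u j = 0 then _ else 0) * (if v j = 0 then _ else 0) = 0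
      by_cases hu : u j = 0
      · rw [if_neg (show ¬ v j = 0 by omega), mul_zero]
      · rw [if_neg hu, zero_mul]
  map_zero' := by
    apply MvPowerSeries.ext
    intro d
    show (if d j = 0 then MvPowerSeries.coeff d 0 else 0) = MvPowerSeries.coeff d 0
    simp
  map_add' f g := by
    apply MvPowerSeries.ext
    intro d
    show (if d j = 0 then MvPowerSeries.coeff d (f + g) else 0)
        = MvPowerSeries.coeff d (_ + _)
    rw [map_add]
    erw [map_add]
    show _ = (if d j = 0 then _ else 0) + (if d j = 0 then _ else 0)
    by_cases h : d j = 0 <;> simp [h]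

lemma coeff_killHom (j : Fin 3) (d : Fin 3 →₀ ℕ) (f : MvPowerSeries (Fin 3) k) :
    MvPowerSeries.coeff d (killHom j f) = if d j = 0 then MvPowerSeries.coeff d f else 0 :=
  rfl

lemma killHom_X_self (j : Fin 3) : killHom j (MvPowerSeries.X j : MvPowerSeries (Fin 3) k) = 0 := by
  apply MvPowerSeries.ext
  intro d
  rw [coeff_killHom, map_zero]
  by_cases h : d j = 0
  · rw [if_pos h, MvPowerSeries.coeff_X, if_neg]
    intro hd
    rw [hd] at h
    simp at h
  · rw [if_neg h]

lemma killHom_X_ne {i j : Fin 3} (h : i ≠ j) :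
    killHom j (MvPowerSeries.X i : MvPowerSeries (Fin 3) k) = MvPowerSeries.X i := by
  apply MvPowerSeries.ext
  intro d
  rw [coeff_killHom]
  by_cases hd : d j = 0
  · rw [if_pos hd]
  · rw [if_neg hd, MvPowerSeries.coeff_X, if_neg]
    intro hd'
    rw [hd'] at hd
    exact hd (Finsupp.single_eq_of_ne h.symm)

lemma killHom_idem (j : Fin 3) (f : MvPowerSeries (Fin 3) k) :
    killHom j (killHom j f) = killHom j f := by
  apply MvPowerSeries.ext
  intro d
  rw [coeff_killHom, coeff_killHom]
  by_cases h : d j = 0 <;> simp [h]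

lemma killHom_comp (j : Fin 3) :
    (killHom j).comp (killHom j) = (killHom j : MvPowerSeries (Fin 3) k →+* _) :=
  RingHom.ext fun f => killHom_idem j f

lemma X_dvd_of_killHom_eq_zero {j : Fin 3} {f : MvPowerSeries (Fin 3) k}
    (h : killHom j f = 0) : (MvPowerSeries.X j : MvPowerSeries (Fin 3) k) ∣ f := by
  rw [MvPowerSeries.X_dvd_iff]
  intro m hm
  have := congrArg (MvPowerSeries.coeff m) h
  rwa [coeff_killHom, map_zero, if_pos hm] at this

lemma Xvar_ne_zero (j : Fin 3) : (MvPowerSeries.X j : MvPowerSeries (Fin 3) k) ≠ 0 := by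
  intro h
  have := congrArg (MvPowerSeries.coeff (Finsupp.single j 1)) h
  rw [MvPowerSeries.coeff_X, if_pos rfl, map_zero] at this
  exact one_ne_zero this



instance : IsDomain (MvPowerSeries (Fin 3) k) := NoZeroDivisors.to_isDomain _

/-- first generator -/
def Gone (k : Type) [Field k] (a : ℕ) : Polynomial (MvPowerSeries (Fin 3) k) :=
  Polynomial.C (MvPowerSeries.X 0) * Polynomial.X - Polynomial.C (MvPowerSeries.X 2 ^ a)

/-- second generator -/
def Gtwo (k : Type) [Field k] (r a : ℕ) : Polynomial (MvPowerSeries (Fin 3) k) :=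
  Polynomial.C (MvPowerSeries.X 2 ^ (r - a)) * Polynomial.X - Polynomial.C (MvPowerSeries.X 1)

lemma pdiv (a : ℕ) :
    ∀ (N : ℕ) (f : Polynomial (MvPowerSeries (Fin 3) k)), f.natDegree ≤ N →
    ∃ (n : ℕ) (q : Polynomial (MvPowerSeries (Fin 3) k)) (c : MvPowerSeries (Fin 3) k),
      Polynomial.C (MvPowerSeries.X 0) ^ n * f = q * Gone k a + Polynomial.C c := by
  intro N
  induction N with
  | zero =>
    intro f hf
    refine ⟨0, 0, f.coeff 0, ?_⟩
    conv_lhs => rw [Polynomial.eq_C_of_natDegree_le_zero hf]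
    simp
  | succ N ih =>
    intro f hf
    obtain ⟨n, q, c, hqc⟩ := ih f.divX (by
      rw [Polynomial.natDegree_divX_eq_natDegree_tsub_one]; omega)
    refine ⟨n + 1,
      Polynomial.C (MvPowerSeries.X 0) ^ n * f.divX + Polynomial.C (MvPowerSeries.X 2 ^ a) * q,
      MvPowerSeries.X 2 ^ a * c + MvPowerSeries.X 0 ^ (n + 1) * f.coeff 0, ?_⟩
    have hf0 := Polynomial.X_mul_divX_add f
    unfold Gone at hqc ⊢
    simp only [map_add, map_mul, map_pow] at hqc ⊢
    linear_combination (Polynomial.C (MvPowerSeries.X 2) ^ a) * hqc -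
      Polynomial.C (MvPowerSeries.X 0) ^ (n + 1) * hf0

lemma Gtwo_ne_zero (r a : ℕ) : (Gtwo k r a) ≠ 0 := by
  intro h
  have := congrArg (fun p => Polynomial.coeff p 0) h
  simp only [Gtwo, coeff_sub, Polynomial.mul_coeff_zero, Polynomial.coeff_C_zero,
    Polynomial.coeff_X_zero, mul_zero, zero_sub, Polynomial.coeff_zero, neg_eq_zero] at this
  exact Xvar_ne_zero 1 this

lemma killHom_pow_X2 (j : Fin 3) (hj : j ≠ 2) (m : ℕ) :
    killHom j (MvPowerSeries.X 2 ^ m : MvPowerSeries (Fin 3) k) = MvPowerSeries.X 2 ^ m := by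
  rw [map_pow, killHom_X_ne (Ne.symm hj)]

lemma map_killHom0_Gtwo (r a : ℕ) :
    (Gtwo k r a).map (killHom 0) = Gtwo k r a := by
  simp only [Gtwo, Polynomial.map_sub, Polynomial.map_mul, Polynomial.map_C, Polynomial.map_X]
  rw [killHom_pow_X2 0 (by decide), killHom_X_ne (by decide : (1 : Fin 3) ≠ 0)]

lemma C_dvd_of_map_killHom_eq_zero {j : Fin 3} {v : Polynomial (MvPowerSeries (Fin 3) k)}
    (h : v.map (killHom j) = 0) : Polynomial.C (MvPowerSeries.X j) ∣ v := by
  rw [Polynomial.C_dvd_iff_dvd_coeff]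
  intro i
  apply X_dvd_of_killHom_eq_zero
  have := congrArg (fun p => Polynomial.coeff p i) h
  simpa using this

lemma gtwo_dvd_step (r a : ℕ) (u : Polynomial (MvPowerSeries (Fin 3) k))
    (h : Gtwo k r a ∣ Polynomial.C (MvPowerSeries.X 2) * u) : Gtwo k r a ∣ u := by
  obtain ⟨v, hv⟩ := h
  have h2 := congrArg (Polynomial.map (killHom 2)) hv
  simp only [Polynomial.map_mul, Polynomial.map_C, killHom_X_self] at h2
  rw [Polynomial.C_0, zero_mul] at h2
  have hg2ne : (Gtwo k r a).map (killHom 2) ≠ 0 := by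
    intro h0
    have := congrArg (fun p => Polynomial.coeff p 0) h0
    simp only [Gtwo, Polynomial.map_sub, Polynomial.map_mul, Polynomial.map_C, Polynomial.map_X,
      killHom_X_ne (by decide : (1 : Fin 3) ≠ 2), coeff_sub, Polynomial.mul_coeff_zero,
      Polynomial.coeff_C_zero, Polynomial.coeff_X_zero, mul_zero, zero_sub, Polynomial.coeff_zero,
      neg_eq_zero] at this
    exact Xvar_ne_zero 1 this
  have hv0 : v.map (killHom 2) = 0 := by
    rcases mul_eq_zero.mp h2.symm with h' | h'
    · exact absurd h' hg2ne
    · exact h'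
  obtain ⟨v', rfl⟩ := C_dvd_of_map_killHom_eq_zero hv0
  refine ⟨v', ?_⟩
  apply mul_left_cancel₀ (show (Polynomial.C (MvPowerSeries.X 2) : Polynomial (MvPowerSeries (Fin 3) k)) ≠ 0
    from fun h => Xvar_ne_zero 2 (Polynomial.C_eq_zero.mp h))
  rw [hv]; ring

lemma gtwo_dvd_pow (r a : ℕ) (m : ℕ) :
    ∀ u : Polynomial (MvPowerSeries (Fin 3) k),
      Gtwo k r a ∣ Polynomial.C (MvPowerSeries.X 2) ^ m * u → Gtwo k r a ∣ u := by
  induction m with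
  | zero => intro u h; simpa using h
  | succ m ih =>
    intro u h
    have : Gtwo k r a ∣ Polynomial.C (MvPowerSeries.X 2) ^ m *
        (Polynomial.C (MvPowerSeries.X 2) * u) := by
      rw [← mul_assoc, ← pow_succ]; exact h
    exact gtwo_dvd_step r a u (ih _ this)



lemma map_killHom0_Gone (a : ℕ) :
    (Gone k a).map (killHom 0) = -Polynomial.C (MvPowerSeries.X 2 ^ a) := by
  simp only [Gone, Polynomial.map_sub, Polynomial.map_mul, Polynomial.map_C, Polynomial.map_X,
    killHom_X_self, Polynomial.C_0, zero_mul, zero_sub]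
  rw [killHom_pow_X2 0 (by decide)]

lemma satur (r a : ℕ) (f : Polynomial (MvPowerSeries (Fin 3) k))
    (hf : ∃ A B, A * Gone k a + B * Gtwo k r a = Polynomial.C (MvPowerSeries.X 0) * f) :
    ∃ A B, A * Gone k a + B * Gtwo k r a = f := by
  obtain ⟨A, B, hAB⟩ := hf
  have hbar := congrArg (Polynomial.map (killHom 0)) hAB
  simp only [Polynomial.map_add, Polynomial.map_mul, Polynomial.map_C, killHom_X_self,
    Polynomial.C_0, zero_mul, map_killHom0_Gtwo, map_killHom0_Gone] at hbar
  have hdvd : Gtwo k r a ∣ Polynomial.C (MvPowerSeries.X 2) ^ a * (A.map (killHom 0)) := by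
    refine ⟨B.map (killHom 0), ?_⟩
    rw [← Polynomial.C_pow]
    linear_combination -hbar
  obtain ⟨Q, hQ⟩ := gtwo_dvd_pow r a a _ hdvd
  set Q' := Q.map (killHom 0) with hQ'def
  have hAQ : A.map (killHom 0) = Gtwo k r a * Q' := by
    have := congrArg (Polynomial.map (killHom 0)) hQ
    rwa [Polynomial.map_map, killHom_comp, Polynomial.map_mul, map_killHom0_Gtwo] at this
  have hQ'map : Q'.map (killHom 0) = Q' := by
    rw [hQ'def, Polynomial.map_map, killHom_comp]
  have hBbar : B.map (killHom 0) = Polynomial.C (MvPowerSeries.X 2 ^ a) * Q' := by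
    apply mul_right_cancel₀ (Gtwo_ne_zero r a (k := k))
    linear_combination hbar + Polynomial.C (MvPowerSeries.X 2 ^ a) * hAQ
  obtain ⟨A₂, hA₂⟩ : Polynomial.C (MvPowerSeries.X 0) ∣ (A - Gtwo k r a * Q') := by
    apply C_dvd_of_map_killHom_eq_zero
    rw [Polynomial.map_sub, Polynomial.map_mul, map_killHom0_Gtwo, hQ'map, hAQ, sub_self]
  obtain ⟨B₂, hB₂⟩ : Polynomial.C (MvPowerSeries.X 0) ∣
      (B - Polynomial.C (MvPowerSeries.X 2 ^ a) * Q') := by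
    apply C_dvd_of_map_killHom_eq_zero
    rw [Polynomial.map_sub, Polynomial.map_mul, Polynomial.map_C, killHom_pow_X2 0 (by decide),
      hQ'map, hBbar, sub_self]
  refine ⟨A₂, Q' * Polynomial.X + B₂, ?_⟩
  have hgg : Gone k a + Polynomial.C (MvPowerSeries.X 2 ^ a)
      = Polynomial.C (MvPowerSeries.X 0) * Polynomial.X := by
    unfold Gone; ring
  apply mul_left_cancel₀ (show (Polynomial.C (MvPowerSeries.X 0) :
      Polynomial (MvPowerSeries (Fin 3) k)) ≠ 0
    from fun h => Xvar_ne_zero 0 (Polynomial.C_eq_zero.mp h))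
  linear_combination hAB - Gone k a * hA₂ - Gtwo k r a * hB₂ - Q' * Gtwo k r a * hgg

end ChartOneAux

end



set_option maxHeartbeats 1000000
set_option synthInstance.maxHeartbeats 400000

/-- Presentation of the first blow-up chart (from the proof of Proposition 4.2): the `P`-algebra
homomorphism `ε₁ : P[Y] → K = Frac(C_r)` extending `P → C_r → K` and sending `Y ↦ x₃^a / x₁`
has kernel exactly `(X₁·Y − X₃^a, X₃^(r−a)·Y − X₂)`; consequently the `C_r`-subalgebra of `K`
generated by `x₃^a / x₁` is isomorphic to `A₁(a)`. -/
theorem chartOne_presentation (k : Type) [Field k] [IsAlgClosed k] (r a : ℕ)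
    (ha1 : 1 ≤ a) (har : a ≤ r) [IsDomain (Cring k r)]
    (t : FractionRing (Cring k r))
    (ht : t = algebraMap (Cring k r) (FractionRing (Cring k r)) (xthree k r) ^ a /
        algebraMap (Cring k r) (FractionRing (Cring k r)) (xone k r))
    (ε₁ : Polynomial (MvPowerSeries (Fin 3) k) →+* FractionRing (Cring k r))
    (hε₁ : ε₁ = Polynomial.eval₂RingHom
        ((algebraMap (Cring k r) (FractionRing (Cring k r))).comp
          (Ideal.Quotient.mk (nodalRelation k r))) t) :
    RingHom.ker ε₁ = chartOneRelation k r a ∧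
      Nonempty ((Algebra.adjoin (Cring k r) ({t} : Set (FractionRing (Cring k r)))) ≃+*
        chartOne k r a) := by
  classical
  open ChartOneAux in
  have hr1 : 1 ≤ r := ha1.trans har
  have hcrel : chartOneRelation k r a = Ideal.span {Gone k a, Gtwo k r a} := rfl
  set φ : MvPowerSeries (Fin 3) k →+* FractionRing (Cring k r) :=
    (algebraMap (Cring k r) (FractionRing (Cring k r))).comp
      (Ideal.Quotient.mk (nodalRelation k r)) with hφdef
  have hε : ∀ p, ε₁ p = Polynomial.eval₂ φ t p := by
    intro p; rw [hε₁]; rfl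
  have hwmem : (MvPowerSeries.X 0 * MvPowerSeries.X 1 - MvPowerSeries.X 2 ^ r :
      MvPowerSeries (Fin 3) k) ∈ nodalRelation k r := Ideal.subset_span rfl
  have hx1ne : xone k r ≠ 0 := by
    rw [xone, Ne, Ideal.Quotient.eq_zero_iff_mem]
    intro hmem
    unfold nodalRelation at hmem
    obtain ⟨h, hh⟩ := Ideal.mem_span_singleton.mp hmem
    have hthis := congrArg (killHom 1) (congrArg (killHom 2) hh)
    simp only [map_mul, map_sub, map_pow, killHom_X_self,
      killHom_X_ne (show (0 : Fin 3) ≠ 2 by decide),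
      killHom_X_ne (show (1 : Fin 3) ≠ 2 by decide),
      killHom_X_ne (show (0 : Fin 3) ≠ 1 by decide),
      zero_pow (Nat.one_le_iff_ne_zero.mp hr1), sub_zero, mul_zero, zero_mul] at hthis
    exact Xvar_ne_zero 0 hthis
  have hinj := IsFractionRing.injective (Cring k r) (FractionRing (Cring k r))
  have hφeq : ∀ c, φ c = 0 → c ∈ nodalRelation k r := by
    intro c hc
    rw [← Ideal.Quotient.eq_zero_iff_mem]
    apply hinj
    rw [map_zero]
    exact hc
  have hx1K : algebraMap (Cring k r) (FractionRing (Cring k r)) (xone k r) ≠ 0 := by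
    intro h
    exact hx1ne (hinj (by rw [map_zero]; exact h))
  have e1 : φ (MvPowerSeries.X 0) = algebraMap (Cring k r) (FractionRing (Cring k r)) (xone k r) :=
    rfl
  have e3 : φ (MvPowerSeries.X 2)
      = algebraMap (Cring k r) (FractionRing (Cring k r)) (xthree k r) := rfl
  have hφ1ne : φ (MvPowerSeries.X 0) ≠ 0 := by rw [e1]; exact hx1K
  have ht1 : φ (MvPowerSeries.X 0) * t = φ (MvPowerSeries.X 2) ^ a := by
    rw [ht, e1, e3, mul_comm, div_mul_cancel₀ _ hx1K]
  have hx3r : φ (MvPowerSeries.X 2) ^ r = φ (MvPowerSeries.X 0) * φ (MvPowerSeries.X 1) := by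
    have h0 : (Ideal.Quotient.mk (nodalRelation k r)) (MvPowerSeries.X 2 ^ r)
        = (Ideal.Quotient.mk (nodalRelation k r)) (MvPowerSeries.X 0 * MvPowerSeries.X 1) := by
      rw [Ideal.Quotient.eq]
      simpa [neg_sub] using (nodalRelation k r).neg_mem hwmem
    rw [← map_pow, ← map_mul, hφdef, RingHom.comp_apply, RingHom.comp_apply, h0]
  have ht2 : φ (MvPowerSeries.X 2) ^ (r - a) * t = φ (MvPowerSeries.X 1) := by
    rw [ht, ← e1, ← e3, mul_div_assoc']
    rw [← pow_add, Nat.sub_add_cancel har, hx3r, mul_comm (φ (MvPowerSeries.X 0)),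
      mul_div_assoc, div_self hφ1ne, mul_one]
  have hG1 : ε₁ (Gone k a) = 0 := by
    rw [hε]
    simp only [Gone, Polynomial.eval₂_sub, Polynomial.eval₂_mul, Polynomial.eval₂_C,
      Polynomial.eval₂_X]
    rw [map_pow, ht1, sub_self]
  have hG2 : ε₁ (Gtwo k r a) = 0 := by
    rw [hε]
    simp only [Gtwo, Polynomial.eval₂_sub, Polynomial.eval₂_mul, Polynomial.eval₂_C,
      Polynomial.eval₂_X]
    rw [map_pow, ht2, sub_self]
  have hGmem1 : Gone k a ∈ chartOneRelation k r a := by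
    rw [hcrel]; exact Ideal.subset_span (Set.mem_insert _ _)
  have hGmem2 : Gtwo k r a ∈ chartOneRelation k r a := by
    rw [hcrel]; exact Ideal.subset_span (Set.mem_insert_of_mem _ rfl)
  have hCw : Polynomial.C (MvPowerSeries.X 2 ^ (r - a)) * Gone k a
      - Polynomial.C (MvPowerSeries.X 0) * Gtwo k r a
      = Polynomial.C (MvPowerSeries.X 0 * MvPowerSeries.X 1 - MvPowerSeries.X 2 ^ r) := by
    have hpow : (MvPowerSeries.X 2 : MvPowerSeries (Fin 3) k) ^ (r - a) * MvPowerSeries.X 2 ^ a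
        = MvPowerSeries.X 2 ^ r := by rw [← pow_add, Nat.sub_add_cancel har]
    unfold Gone Gtwo
    rw [← hpow]
    simp only [map_sub, map_mul]
    ring
  have hker : RingHom.ker ε₁ = chartOneRelation k r a := by
    apply le_antisymm
    · intro f hfker
      rw [RingHom.mem_ker] at hfker
      obtain ⟨n, q, c, hqc⟩ := pdiv a f.natDegree f le_rfl
      have hc0 : φ c = 0 := by
        have e := congrArg ε₁ hqc
        rw [map_mul, map_pow, map_add, map_mul, hfker, mul_zero, hG1, mul_zero, zero_add] at e
        have e' := e.symm
        rwa [hε, Polynomial.eval₂_C] at e'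
      have hcmem := hφeq c hc0
      unfold nodalRelation at hcmem
      obtain ⟨d, hd⟩ := Ideal.mem_span_singleton.mp hcmem
      have hfmem : Polynomial.C (MvPowerSeries.X 0) ^ n * f ∈ chartOneRelation k r a := by
        rw [hqc, hd]
        apply Ideal.add_mem
        · exact Ideal.mul_mem_left _ _ hGmem1
        · rw [map_mul, ← hCw]
          exact Ideal.mul_mem_right _ _
            (Ideal.sub_mem _ (Ideal.mul_mem_left _ _ hGmem1) (Ideal.mul_mem_left _ _ hGmem2))
      have strip : ∀ (m : ℕ) (g : Polynomial (MvPowerSeries (Fin 3) k)),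
          Polynomial.C (MvPowerSeries.X 0) ^ m * g ∈ chartOneRelation k r a →
          g ∈ chartOneRelation k r a := by
        intro m
        induction m with
        | zero => intro g hg; simpa using hg
        | succ m ih =>
          intro g hg
          have h1 : Polynomial.C (MvPowerSeries.X 0) * g ∈ chartOneRelation k r a := by
            apply ih
            rwa [← mul_assoc, ← pow_succ]
          rw [hcrel] at h1 ⊢
          exact Ideal.mem_span_pair.mpr (satur r a g (Ideal.mem_span_pair.mp h1))
      exact strip n f hfmem
    · rw [hcrel]
      apply Ideal.span_le.mpr
      rintro g hg
      simp only [Set.mem_insert_iff, Set.mem_singleton_iff] at hg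
      rw [SetLike.mem_coe, RingHom.mem_ker]
      rcases hg with rfl | rfl
      · exact hG1
      · exact hG2
  refine ⟨hker, ?_⟩
  have hrange : ∀ x : FractionRing (Cring k r),
      x ∈ Algebra.adjoin (Cring k r) ({t} : Set (FractionRing (Cring k r)))
        ↔ x ∈ RingHom.range ε₁ := by
    intro x
    rw [Algebra.adjoin_singleton_eq_range_aeval]
    constructor
    · rintro ⟨p, rfl⟩
      obtain ⟨q, hq⟩ := Polynomial.map_surjective _
        (Ideal.Quotient.mk_surjective (I := nodalRelation k r)) p
      refine ⟨q, ?_⟩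
      rw [hε, ← hq]
      show Polynomial.eval₂ φ t q
        = Polynomial.aeval t (q.map (Ideal.Quotient.mk (nodalRelation k r)))
      rw [Polynomial.aeval_def, Polynomial.eval₂_map, hφdef]
    · rintro ⟨q, rfl⟩
      refine ⟨q.map (Ideal.Quotient.mk (nodalRelation k r)), ?_⟩
      show Polynomial.aeval t (q.map (Ideal.Quotient.mk (nodalRelation k r))) = ε₁ q
      rw [Polynomial.aeval_def, Polynomial.eval₂_map, hε, hφdef]
  let e : (Algebra.adjoin (Cring k r) ({t} : Set (FractionRing (Cring k r))))
      ≃+* RingHom.range ε₁ :=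
    { toFun := fun x => ⟨x.1, (hrange x.1).mp x.2⟩
      invFun := fun x => ⟨x.1, (hrange x.1).mpr x.2⟩
      left_inv := fun x => rfl
      right_inv := fun x => rfl
      map_mul' := fun x y => rfl
      map_add' := fun x y => rfl }
  exact ⟨e.trans ((RingHom.quotientKerEquivRange ε₁).symm.trans (Ideal.quotEquivOfEq hker))⟩
end

section
/- (Presentation of the second blow-up chart, from the proof of Proposition 4.2 of the paper.) Let k be an algebraically closed field and r, a integers with 1 ≤ a ≤ r. Let K be the field of fractions of the domain C_r, and let ε₂ : P[Y] → K be the P-algebra homomorphism extending the composite P → C_r → K and sending Y to x₁ / x₃^a (note x₃ ≠ 0 in the domain C_r). Then the kernel of ε₂ is exactly the ideal of P[Y] generated by X₁ − X₃^a·Y and X₃^(r−a) − Y·X₂. Consequently the C_r-subalgebra of K generated by x₁/x₃^a is isomorphic to A₂(a) = k⟦X₁,X₂,X₃⟧[Y] ⧸ (X₁ − X₃^a·Y, X₃^(r−a) − Y·X₂). -/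
open Polynomial MvPowerSeries

/-- The ideal of `P[Y]` defining the second blow-up chart
`A₂(a) = P[Y] ⧸ (X₁ − X₃^a·Y, X₃^(r−a) − Y·X₂)`. -/
noncomputable def chartTwoRelation (k : Type) [Field k] (r a : ℕ) :
    Ideal (Polynomial (MvPowerSeries (Fin 3) k)) :=
  Ideal.span
    {Polynomial.C (MvPowerSeries.X 0) - Polynomial.C (MvPowerSeries.X 2 ^ a) * Polynomial.X,
     Polynomial.C (MvPowerSeries.X 2 ^ (r - a)) - Polynomial.X * Polynomial.C (MvPowerSeries.X 1)}

/-- The second blow-up chart `A₂(a)` of the blow-up of `Spec C_r` along `(x₁, x₃^a)`. -/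
abbrev chartTwo (k : Type) [Field k] (r a : ℕ) : Type :=
  Polynomial (MvPowerSeries (Fin 3) k) ⧸ chartTwoRelation k r a

section Aux

open Finsupp

variable {k : Type} [Field k]

local notation "P" => MvPowerSeries (Fin 3) k

private lemma memJ_iff (a : ℕ) (u : P) :
    u ∈ Ideal.span {MvPowerSeries.X 1, (MvPowerSeries.X 2 : P) ^ a} ↔
      ∀ m : Fin 3 →₀ ℕ, m 1 = 0 → m 2 < a → MvPowerSeries.coeff m u = 0 := by
  constructor
  · intro hu m hm1 hm2
    rcases Ideal.mem_span_pair.mp hu with ⟨c, d, rfl⟩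
    rw [map_add, MvPowerSeries.coeff_mul, MvPowerSeries.coeff_mul, Finset.sum_eq_zero, Finset.sum_eq_zero, add_zero]
    · rintro ⟨i, j⟩ hij
      rw [Finset.HasAntidiagonal.mem_antidiagonal] at hij
      rw [MvPowerSeries.coeff_X_pow, if_neg, mul_zero]
      rintro rfl
      rw [← hij, Finsupp.add_apply, single_eq_same] at hm2
      omega
    · rintro ⟨i, j⟩ hij
      rw [Finset.HasAntidiagonal.mem_antidiagonal] at hij
      rw [MvPowerSeries.coeff_X, if_neg, mul_zero]
      rintro rfl
      rw [← hij, Finsupp.add_apply, single_eq_same] at hm1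
      omega
  · intro h
    set u1 : P := fun m => if 1 ≤ m 1 then MvPowerSeries.coeff m u else 0 with hu1
    have h1 : (MvPowerSeries.X 1 : P) ∣ u1 := by
      rw [← pow_one (MvPowerSeries.X 1 : P), MvPowerSeries.X_pow_dvd_iff]
      intro m hm
      show (if 1 ≤ m 1 then MvPowerSeries.coeff m u else 0) = 0
      rw [if_neg]; omega
    have h2 : (MvPowerSeries.X 2 : P) ^ a ∣ u - u1 := by
      rw [MvPowerSeries.X_pow_dvd_iff]
      intro m hm
      show MvPowerSeries.coeff m u - (if 1 ≤ m 1 then MvPowerSeries.coeff m u else 0) = 0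
      by_cases hc : 1 ≤ m 1
      · rw [if_pos hc, sub_self]
      · rw [if_neg hc, h m (by omega) hm, sub_zero]
    rcases h1 with ⟨c, hc⟩
    rcases h2 with ⟨d, hd⟩
    have : u = c * MvPowerSeries.X 1 + d * (MvPowerSeries.X 2 : P) ^ a := by
      rw [mul_comm c, mul_comm d, ← hc, ← hd]; ring
    rw [this]
    exact Ideal.mem_span_pair.mpr ⟨c, d, rfl⟩

private lemma X0_reg (a : ℕ) (u : P)
    (h : MvPowerSeries.X 0 * u ∈ Ideal.span {MvPowerSeries.X 1, (MvPowerSeries.X 2 : P) ^ a}) :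
    u ∈ Ideal.span {MvPowerSeries.X 1, (MvPowerSeries.X 2 : P) ^ a} := by
  rw [memJ_iff] at h ⊢
  intro m hm1 hm2
  have := h (single 0 1 + m) (by rw [Finsupp.add_apply]; simp [hm1]) (by rw [Finsupp.add_apply]; simpa using hm2)
  rwa [MvPowerSeries.X_def, MvPowerSeries.coeff_add_monomial_mul, one_mul] at this

private lemma X0_pow_reg (a d : ℕ) (u : P)
    (h : MvPowerSeries.X 0 ^ d * u ∈ Ideal.span {MvPowerSeries.X 1, (MvPowerSeries.X 2 : P) ^ a}) :
    u ∈ Ideal.span {MvPowerSeries.X 1, (MvPowerSeries.X 2 : P) ^ a} := by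
  induction d with
  | zero => simpa using h
  | succ n ih =>
      apply ih
      apply X0_reg
      rw [← mul_assoc, ← pow_succ']; exact h

private lemma X0_not_mem (r : ℕ) (hr : 1 ≤ r) :
    (MvPowerSeries.X 0 : P) ∉
      Ideal.span {(MvPowerSeries.X 0 : P) * MvPowerSeries.X 1 - MvPowerSeries.X 2 ^ r} := by
  intro h
  rcases Ideal.mem_span_singleton'.mp h with ⟨w, hw⟩
  have := congrArg (MvPowerSeries.coeff (single 0 1)) hw
  rw [MvPowerSeries.coeff_mul, Finset.sum_eq_zero, MvPowerSeries.coeff_X, if_pos rfl] at this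
  · exact one_ne_zero this.symm
  · rintro ⟨i, j⟩ hij
    rw [Finset.HasAntidiagonal.mem_antidiagonal] at hij
    have hj1 : i 1 + j 1 = 0 := by rw [← Finsupp.add_apply, hij]; simp
    have hj2 : i 2 + j 2 = 0 := by rw [← Finsupp.add_apply, hij]; simp
    rw [map_sub, MvPowerSeries.X_def, MvPowerSeries.X_def, MvPowerSeries.monomial_mul_monomial, one_mul, MvPowerSeries.coeff_monomial,
      MvPowerSeries.coeff_X_pow, if_neg, if_neg, sub_zero, mul_zero]
    · rintro rfl
      rw [single_eq_same] at hj2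
      omega
    · rintro rfl
      rw [Finsupp.add_apply, single_eq_same] at hj1
      simp at hj1

private lemma X1_not_mem (r : ℕ) (hr : 1 ≤ r) :
    (MvPowerSeries.X 1 : P) ∉
      Ideal.span {(MvPowerSeries.X 0 : P) * MvPowerSeries.X 1 - MvPowerSeries.X 2 ^ r} := by
  intro h
  rcases Ideal.mem_span_singleton'.mp h with ⟨w, hw⟩
  have := congrArg (MvPowerSeries.coeff (single 1 1)) hw
  rw [MvPowerSeries.coeff_mul, Finset.sum_eq_zero, MvPowerSeries.coeff_X, if_pos rfl] at this
  · exact one_ne_zero this.symm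
  · rintro ⟨i, j⟩ hij
    rw [Finset.HasAntidiagonal.mem_antidiagonal] at hij
    have hj0 : i 0 + j 0 = 0 := by rw [← Finsupp.add_apply, hij]; simp
    have hj2 : i 2 + j 2 = 0 := by rw [← Finsupp.add_apply, hij]; simp
    rw [map_sub, MvPowerSeries.X_def, MvPowerSeries.X_def, MvPowerSeries.monomial_mul_monomial, one_mul, MvPowerSeries.coeff_monomial,
      MvPowerSeries.coeff_X_pow, if_neg, if_neg, sub_zero, mul_zero]
    · rintro rfl
      rw [single_eq_same] at hj2
      omega
    · rintro rfl
      rw [Finsupp.add_apply, single_eq_same] at hj0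
      simp at hj0

end Aux

set_option maxHeartbeats 4000000 in
set_option synthInstance.maxHeartbeats 400000 in
/-- Presentation of the second blow-up chart (from the proof of Proposition 4.2): the `P`-algebra
homomorphism `ε₂ : P[Y] → K = Frac(C_r)` extending `P → C_r → K` and sending `Y ↦ x₁ / x₃^a`
has kernel exactly `(X₁ − X₃^a·Y, X₃^(r−a) − Y·X₂)`; consequently the `C_r`-subalgebra of `K`
generated by `x₁ / x₃^a` is isomorphic to `A₂(a)`. -/
theorem chartTwo_presentation (k : Type) [Field k] [IsAlgClosed k] (r a : ℕ)
    (ha1 : 1 ≤ a) (har : a ≤ r) [IsDomain (Cring k r)]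
    (t : FractionRing (Cring k r))
    (ht : t = algebraMap (Cring k r) (FractionRing (Cring k r)) (xone k r) /
        algebraMap (Cring k r) (FractionRing (Cring k r)) (xthree k r) ^ a)
    (ε₂ : Polynomial (MvPowerSeries (Fin 3) k) →+* FractionRing (Cring k r))
    (hε₂ : ε₂ = Polynomial.eval₂RingHom
        ((algebraMap (Cring k r) (FractionRing (Cring k r))).comp
          (Ideal.Quotient.mk (nodalRelation k r))) t) :
    RingHom.ker ε₂ = chartTwoRelation k r a ∧
      Nonempty ((Algebra.adjoin (Cring k r) ({t} : Set (FractionRing (Cring k r)))) ≃+*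
        chartTwo k r a) := by
  classical
  have hra : 1 ≤ r := le_trans ha1 har
  let ν : MvPowerSeries (Fin 3) k :=
    MvPowerSeries.X 0 * MvPowerSeries.X 1 - MvPowerSeries.X 2 ^ r
  have hνdef : ν = MvPowerSeries.X 0 * MvPowerSeries.X 1 - MvPowerSeries.X 2 ^ r := rfl
  let mkP := Ideal.Quotient.mk (nodalRelation k r)
  let ι := algebraMap (Cring k r) (FractionRing (Cring k r))
  let g1 : Polynomial (MvPowerSeries (Fin 3) k) :=
    Polynomial.C (MvPowerSeries.X 0) - Polynomial.C (MvPowerSeries.X 2 ^ a) * Polynomial.X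
  have hg1def : g1 = Polynomial.C (MvPowerSeries.X 0)
      - Polynomial.C (MvPowerSeries.X 2 ^ a) * Polynomial.X := rfl
  let g2 : Polynomial (MvPowerSeries (Fin 3) k) :=
    Polynomial.C (MvPowerSeries.X 2 ^ (r - a)) - Polynomial.X * Polynomial.C (MvPowerSeries.X 1)
  have hg2def : g2 = Polynomial.C (MvPowerSeries.X 2 ^ (r - a))
      - Polynomial.X * Polynomial.C (MvPowerSeries.X 1) := rfl
  have hinj : Function.Injective ι := IsFractionRing.injective _ _
  have hν0 : mkP ν = 0 :=
    Ideal.Quotient.eq_zero_iff_mem.mpr (Ideal.subset_span (Set.mem_singleton _))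
  have ht' : t = ι (mkP (MvPowerSeries.X 0)) / ι (mkP (MvPowerSeries.X 2)) ^ a := ht
  have hx10 : mkP (MvPowerSeries.X 0) ≠ 0 := fun h =>
    X0_not_mem r hra (Ideal.Quotient.eq_zero_iff_mem.mp h)
  have hx20 : mkP (MvPowerSeries.X 1) ≠ 0 := fun h =>
    X1_not_mem r hra (Ideal.Quotient.eq_zero_iff_mem.mp h)
  have hmul0 : mkP (MvPowerSeries.X 0) * mkP (MvPowerSeries.X 1)
      = mkP (MvPowerSeries.X 2) ^ r := by
    have := hν0
    rw [hνdef, map_sub, map_mul, map_pow, sub_eq_zero] at this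
    exact this
  have hx30 : mkP (MvPowerSeries.X 2) ≠ 0 := by
    intro h
    rw [h, zero_pow (by omega)] at hmul0
    rcases mul_eq_zero.mp hmul0 with h1 | h1
    exacts [hx10 h1, hx20 h1]
  have hx3K : ι (mkP (MvPowerSeries.X 2)) ≠ 0 := fun h => hx30 (hinj (by rw [h, map_zero]))
  have hε₂app : ∀ q : Polynomial (MvPowerSeries (Fin 3) k),
      ε₂ q = Polynomial.eval₂ (ι.comp mkP) t q := by
    intro q; rw [hε₂]; rfl
  have hε₂C : ∀ p : MvPowerSeries (Fin 3) k, ε₂ (Polynomial.C p) = ι (mkP p) := by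
    intro p; rw [hε₂app, Polynomial.eval₂_C]; rfl
  have hε₂X : ε₂ Polynomial.X = t := by rw [hε₂app, Polynomial.eval₂_X]
  have hmulK : ι (mkP (MvPowerSeries.X 0)) * ι (mkP (MvPowerSeries.X 1))
      = ι (mkP (MvPowerSeries.X 2)) ^ r := by
    rw [← map_mul, hmul0, map_pow]
  have hg1mem : g1 ∈ chartTwoRelation k r a := Ideal.subset_span (Set.mem_insert _ _)
  have hg2mem : g2 ∈ chartTwoRelation k r a :=
    Ideal.subset_span (Set.mem_insert_of_mem _ rfl)
  have hg1 : ε₂ g1 = 0 := by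
    rw [hg1def, map_sub, map_mul, hε₂C, hε₂C, hε₂X, ht', map_pow]
    field_simp
    rw [map_pow]; ring
  have hg2 : ε₂ g2 = 0 := by
    rw [hg2def, map_sub, map_mul, hε₂C, hε₂C, hε₂X, ht', map_pow, map_pow]
    rw [sub_eq_zero, div_mul_eq_mul_div, eq_div_iff (pow_ne_zero a hx3K), ← pow_add,
      Nat.sub_add_cancel har, hmulK]
  have hsub : chartTwoRelation k r a ≤ RingHom.ker ε₂ := by
    rw [chartTwoRelation, Ideal.span_le]
    rintro x hx
    simp only [Set.mem_insert_iff, Set.mem_singleton_iff] at hx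
    rcases hx with rfl | rfl
    · exact RingHom.mem_ker.mpr hg1
    · exact RingHom.mem_ker.mpr hg2
  have hCν : Polynomial.C ν ∈ chartTwoRelation k r a := by
    have hpow : (MvPowerSeries.X 2 : MvPowerSeries (Fin 3) k) ^ a * MvPowerSeries.X 2 ^ (r - a)
        = MvPowerSeries.X 2 ^ r := by
      rw [← pow_add, Nat.add_sub_cancel' har]
    have hint : (Polynomial.C ν : Polynomial (MvPowerSeries (Fin 3) k))
        = Polynomial.C (MvPowerSeries.X 1) * g1 - Polynomial.C (MvPowerSeries.X 2 ^ a) * g2 := by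
      rw [hνdef, ← hpow, hg1def, hg2def]
      simp only [map_sub, map_mul]
      ring
    rw [hint]
    exact sub_mem (Ideal.mul_mem_left _ _ hg1mem) (Ideal.mul_mem_left _ _ hg2mem)
  have hνJ : nodalRelation k r ≤
      Ideal.span {MvPowerSeries.X 1, (MvPowerSeries.X 2 : MvPowerSeries (Fin 3) k) ^ a} := by
    rw [nodalRelation, Ideal.span_le]
    intro x hx
    rw [Set.mem_singleton_iff] at hx
    subst hx
    refine Ideal.mem_span_pair.mpr ⟨MvPowerSeries.X 0, -(MvPowerSeries.X 2 ^ (r - a)), ?_⟩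
    rw [neg_mul, ← pow_add, Nat.sub_add_cancel har]
    ring
  have main : ∀ n : ℕ, ∀ f : Polynomial (MvPowerSeries (Fin 3) k),
      f.natDegree ≤ n → ε₂ f = 0 → f ∈ chartTwoRelation k r a := by
    intro n
    induction n with
    | zero =>
        intro f hdeg hf
        have hfC : f = Polynomial.C (f.coeff 0) := Polynomial.eq_C_of_natDegree_le_zero hdeg
        rw [hfC] at hf ⊢
        rw [hε₂C] at hf
        have h0 : mkP (f.coeff 0) = 0 := hinj (by rw [hf, map_zero])
        rcases Ideal.mem_span_singleton'.mp (Ideal.Quotient.eq_zero_iff_mem.mp h0) with ⟨w, hw⟩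
        have : f.coeff 0 = w * ν := hw.symm
        rw [this, map_mul]
        exact Ideal.mul_mem_left _ _ hCν
    | succ n ih =>
        intro f hdeg hf
        by_cases hle : f.natDegree ≤ n
        · exact ih f hle hf
        have hd : f.natDegree = n + 1 := by omega
        -- the sum identity in K
        have hsum0 : (∑ i ∈ Finset.range (n + 2), ι (mkP (f.coeff i)) * t ^ i) = 0 := by
          have h1 := hf
          rw [hε₂app, Polynomial.eval₂_eq_sum_range, hd] at h1
          simpa only [RingHom.comp_apply] using h1
        -- the power series S
        have hS0 : ι (mkP (∑ i ∈ Finset.range (n + 2),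
            f.coeff i * MvPowerSeries.X 0 ^ i * MvPowerSeries.X 2 ^ (a * (n + 1 - i)))) = 0 := by
          rw [map_sum, map_sum]
          have key : ∀ i ∈ Finset.range (n + 2),
              ι (mkP (f.coeff i * MvPowerSeries.X 0 ^ i
                * MvPowerSeries.X 2 ^ (a * (n + 1 - i))))
              = ι (mkP (f.coeff i)) * t ^ i * ι (mkP (MvPowerSeries.X 2)) ^ (a * (n + 1)) := by
            intro i hi
            rw [Finset.mem_range] at hi
            have hi' : i ≤ n + 1 := by omega
            have hwpow : (ι (mkP (MvPowerSeries.X 2))) ^ (a * (n + 1))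
                = (ι (mkP (MvPowerSeries.X 2))) ^ (a * i)
                  * (ι (mkP (MvPowerSeries.X 2))) ^ (a * (n + 1 - i)) := by
              rw [← pow_add, ← Nat.mul_add, Nat.add_sub_cancel' hi']
            rw [map_mul, map_mul, map_mul, map_mul, map_pow, map_pow, map_pow, map_pow, ht',
              div_pow, ← pow_mul, hwpow]
            have hz : (ι (mkP (MvPowerSeries.X 2))) ^ (a * i) ≠ 0 := pow_ne_zero _ hx3K
            field_simp
          rw [Finset.sum_congr rfl key, ← Finset.sum_mul, hsum0, zero_mul]
        have hSmem : (∑ i ∈ Finset.range (n + 2),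
            f.coeff i * MvPowerSeries.X 0 ^ i * MvPowerSeries.X 2 ^ (a * (n + 1 - i)))
            ∈ nodalRelation k r :=
          Ideal.Quotient.eq_zero_iff_mem.mp (hinj (by rw [hS0, map_zero]))
        have hXF : MvPowerSeries.X 0 ^ (n + 1) * f.coeff (f.natDegree)
            ∈ Ideal.span {MvPowerSeries.X 1,
                (MvPowerSeries.X 2 : MvPowerSeries (Fin 3) k) ^ a} := by
          have hterms : ∀ i ∈ Finset.range (n + 1),
              f.coeff i * MvPowerSeries.X 0 ^ i * MvPowerSeries.X 2 ^ (a * (n + 1 - i))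
              ∈ Ideal.span {MvPowerSeries.X 1,
                  (MvPowerSeries.X 2 : MvPowerSeries (Fin 3) k) ^ a} := by
            intro i hi
            rw [Finset.mem_range] at hi
            have hle2 : a ≤ a * (n + 1 - i) := Nat.le_mul_of_pos_right a (by omega)
            have : (MvPowerSeries.X 2 : MvPowerSeries (Fin 3) k) ^ (a * (n + 1 - i))
                = MvPowerSeries.X 2 ^ (a * (n + 1 - i) - a) * MvPowerSeries.X 2 ^ a := by
              rw [← pow_add, Nat.sub_add_cancel hle2]
            rw [this, ← mul_assoc]
            exact Ideal.mul_mem_left _ _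
              (Ideal.subset_span (Set.mem_insert_of_mem _ rfl))
          have hsplit : MvPowerSeries.X 0 ^ (n + 1) * f.coeff (f.natDegree)
              = (∑ i ∈ Finset.range (n + 2),
                  f.coeff i * MvPowerSeries.X 0 ^ i * MvPowerSeries.X 2 ^ (a * (n + 1 - i)))
                - ∑ i ∈ Finset.range (n + 1),
                  f.coeff i * MvPowerSeries.X 0 ^ i * MvPowerSeries.X 2 ^ (a * (n + 1 - i)) := by
            rw [Finset.sum_range_succ, hd]
            simp only [Nat.sub_self, Nat.mul_zero, pow_zero, mul_one]
            ring
          rw [hsplit]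
          exact sub_mem (hνJ hSmem) (Ideal.sum_mem _ hterms)
        rcases Ideal.mem_span_pair.mp (X0_pow_reg a (n + 1) _ hXF) with ⟨α, β, hF⟩
        -- the correction polynomial
        have hG : ε₂ (Polynomial.C β * g1 + Polynomial.C α * g2) = 0 := by
          rw [map_add, map_mul, map_mul, hg1, hg2, mul_zero, mul_zero, add_zero]
        have hGmem : Polynomial.C β * g1 + Polynomial.C α * g2 ∈ chartTwoRelation k r a :=
          add_mem (Ideal.mul_mem_left _ _ hg1mem) (Ideal.mul_mem_left _ _ hg2mem)
        set G : Polynomial (MvPowerSeries (Fin 3) k) :=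
          Polynomial.C β * g1 + Polynomial.C α * g2 with hGdef
        have hGc : ∀ m : ℕ, 2 ≤ m → G.coeff m = 0 := by
          intro m hm
          obtain ⟨m', rfl⟩ : ∃ m', m = m' + 1 := ⟨m - 1, by omega⟩
          have h2 : m' + 1 ≠ 0 := by omega
          have h1 : m' ≠ 0 := by omega
          rw [hGdef, hg1def, hg2def]
          simp only [Polynomial.coeff_add, Polynomial.coeff_sub, Polynomial.coeff_C_mul,
            Polynomial.X_mul, Polynomial.coeff_mul_X, Polynomial.coeff_C, h1, h2,
            if_false, mul_zero, sub_zero, zero_sub, mul_neg, neg_add_rev, neg_zero, add_zero,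
            zero_add, neg_neg]
        have hcCX : ∀ b : MvPowerSeries (Fin 3) k,
            (Polynomial.C b * Polynomial.X : Polynomial (MvPowerSeries (Fin 3) k)).coeff 1
              = b := by
          intro b
          rw [show (1 : ℕ) = 0 + 1 from rfl, Polynomial.coeff_mul_X, Polynomial.coeff_C_zero]
        have hG1 : G.coeff 1 = -(β * MvPowerSeries.X 2 ^ a + α * MvPowerSeries.X 1) := by
          rw [hGdef, hg1def, hg2def]
          rw [Polynomial.coeff_add, Polynomial.coeff_C_mul, Polynomial.coeff_C_mul,
            Polynomial.coeff_sub, Polynomial.coeff_sub, Polynomial.X_mul, hcCX, hcCX,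
            Polynomial.coeff_C, Polynomial.coeff_C]
          simp only [one_ne_zero, if_false]
          ring
        have hf'deg : (f + G * Polynomial.X ^ n).natDegree ≤ n := by
          rw [Polynomial.natDegree_le_iff_coeff_eq_zero]
          intro N hN
          rw [Polynomial.coeff_add, Polynomial.coeff_mul_X_pow', if_pos (by omega : n ≤ N)]
          rcases eq_or_lt_of_le (show n + 1 ≤ N by omega) with hEq | hlt
          · rw [show N - n = 1 by omega, hG1, show N = f.natDegree by omega, ← hF]
            ring
          · rw [Polynomial.coeff_eq_zero_of_natDegree_lt (by omega : f.natDegree < N),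
              hGc (N - n) (by omega), add_zero]
        have hf'0 : ε₂ (f + G * Polynomial.X ^ n) = 0 := by
          rw [map_add, map_mul, hG, zero_mul, add_zero, hf]
        have hf'mem := ih _ hf'deg hf'0
        have hfeq : f = (f + G * Polynomial.X ^ n) - G * Polynomial.X ^ n := by ring
        rw [hfeq]
        exact sub_mem hf'mem (Ideal.mul_mem_right _ _ hGmem)
  have hker : RingHom.ker ε₂ = chartTwoRelation k r a :=
    le_antisymm (fun f hf => main f.natDegree f le_rfl (RingHom.mem_ker.mp hf)) hsub
  refine ⟨hker, ?_⟩
  have hrange : ∀ x : FractionRing (Cring k r),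
      x ∈ Algebra.adjoin (Cring k r) ({t} : Set (FractionRing (Cring k r)))
        ↔ x ∈ RingHom.range ε₂ := by
    intro x
    rw [Algebra.adjoin_singleton_eq_range_aeval]
    have haev : ∀ q : Polynomial (MvPowerSeries (Fin 3) k),
        Polynomial.aeval (R := Cring k r) t (q.map mkP) = ε₂ q := by
      intro q
      rw [hε₂app, Polynomial.aeval_def, Polynomial.eval₂_map]
    constructor
    · rintro ⟨p, rfl⟩
      obtain ⟨q, rfl⟩ := Polynomial.map_surjective mkP Ideal.Quotient.mk_surjective p
      exact ⟨q, (haev q).symm⟩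
    · rintro ⟨q, rfl⟩
      exact ⟨q.map mkP, haev q⟩
  let e3 : (Algebra.adjoin (Cring k r) ({t} : Set (FractionRing (Cring k r)))) ≃+*
      RingHom.range ε₂ :=
    RingEquiv.mk (Equiv.mk (fun x => ⟨x.1, (hrange x.1).mp x.2⟩)
      (fun y => ⟨y.1, (hrange y.1).mpr y.2⟩) (fun x => rfl) (fun y => rfl))
      (fun x y => rfl) (fun x y => rfl)
  exact ⟨e3.trans ((RingHom.quotientKerEquivRange ε₂).symm.trans (Ideal.quotEquivOfEq hker))⟩
end
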